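/- Tail lower bound for the exponential series: For every natural number n₀ ≥ 1 and every x > 0, Σ_{k ≥ n₀} x^k/k! ≥ c · x^{n₀} e^{x/2} where c > 0 depends only on n₀. -/

import Mathlib

lemma choose_le_two_pow' (n k : ℕ) : n.choose k ≤ 2 ^ n := by
  rcases le_or_gt k n with h | h
  · calc n.choose k ≤ ∑ m ∈ Finset.range (n + 1), n.choose m :=
        Finset.single_le_sum (fun _ _ => Nat.zero_le _) (Finset.mem_range.2 (Nat.lt_succ_of_le h))
      _ = 2 ^ n := Nat.sum_range_choose n
  · simp [Nat.choose_eq_zero_of_lt h]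

theorem stmt_13 (n₀ : ℕ) (hn₀ : 1 ≤ n₀) :
    ∃ c : ℝ, 0 < c ∧ ∀ x : ℝ, 0 < x →
      c * x ^ n₀ * Real.exp (x / 2) ≤
        ∑' k : ℕ, x ^ (k + n₀) / ((k + n₀).factorial : ℝ) := by
  refine ⟨((n₀.factorial : ℝ) * 2 ^ n₀)⁻¹, by positivity, fun x hx => ?_⟩
  have hsum : Summable (fun k : ℕ => x ^ (k + n₀) / ((k + n₀).factorial : ℝ)) :=
    (Real.summable_pow_div_factorial x).comp_injective (add_left_injective n₀)
  have hexp : Real.exp (x / 2) = ∑' k : ℕ, (x / 2) ^ k / (k.factorial : ℝ) := by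
    rw [Real.exp_eq_exp_ℝ, NormedSpace.exp_eq_tsum_div]
  rw [hexp, ← tsum_mul_left]
  refine Summable.tsum_le_tsum (fun k => ?_) ((Real.summable_pow_div_factorial (x / 2)).mul_left _) hsum
  have hfac : ((k + n₀).factorial : ℝ) ≤ (n₀.factorial : ℝ) * 2 ^ n₀ * (2 ^ k * k.factorial) := by
    have h1 : (k + n₀).factorial ≤ n₀.factorial * k.factorial * 2 ^ (k + n₀) := by
      have := Nat.add_choose_mul_factorial_mul_factorial k n₀
      calc (k + n₀).factorial = (k + n₀).choose n₀ * k.factorial * n₀.factorial :=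
            (Nat.add_choose_mul_factorial_mul_factorial k n₀).symm
        _ ≤ 2 ^ (k + n₀) * k.factorial * n₀.factorial := by
            gcongr; exact choose_le_two_pow' _ _
        _ = n₀.factorial * k.factorial * 2 ^ (k + n₀) := by ring
    calc ((k + n₀).factorial : ℝ) ≤ ((n₀.factorial * k.factorial * 2 ^ (k + n₀) : ℕ) : ℝ) := by
          exact_mod_cast h1
      _ = (n₀.factorial : ℝ) * 2 ^ n₀ * (2 ^ k * k.factorial) := by
          push_cast; ring
  have hkn : (0 : ℝ) < (k + n₀).factorial := by positivity
  have hL : ((n₀.factorial : ℝ) * 2 ^ n₀)⁻¹ * x ^ n₀ * ((x / 2) ^ k / (k.factorial : ℝ))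
      = x ^ (k + n₀) / ((n₀.factorial : ℝ) * 2 ^ n₀ * (2 ^ k * k.factorial)) := by
    rw [div_pow, pow_add]
    have h1 : (n₀.factorial : ℝ) ≠ 0 := by positivity
    have h2 : (k.factorial : ℝ) ≠ 0 := by positivity
    field_simp
  rw [hL]
  gcongr
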